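/- Let η be a non-trivial scale (lim_ω η_n = 0). Then for every sequence z : ℕ → ℂ, one has lim_ω |z_n|^{η_n} ≤ 1 if and only if there exists a non-trivial scale η' with η < η' (i.e. lim_ω η_n/η'_n = 0) such that lim_ω |z_n|^{η'_n} ≤ 1. -/

import Mathlib

open Filter

/-- The ω-limit of a sequence in the compact space `[0,∞]`; for an ultrafilter this
equals the `limsup` along the ultrafilter. -/
noncomputable def limw (ω : Ultrafilter ℕ) (a : ℕ → ENNReal) : ENNReal :=
  Filter.limsup a (ω : Filter ℕ)

/-- `lim_ω |z_n|^{η_n}` viewed in `[0,∞]`. -/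
noncomputable def limNorm (ω : Ultrafilter ℕ) (η : ℕ → ℝ) (z : ℕ → ℂ) : ENNReal :=
  limw ω (fun n => ENNReal.ofReal (‖z n‖ ^ η n))

/-- A scale is a sequence with values in `(0,1]`. -/
def IsScale (η : ℕ → ℝ) : Prop := ∀ n, 0 < η n ∧ η n ≤ 1

/-- `lim_ω η_n / η'_n` in `[0,∞]`. -/
noncomputable def scaleRatio (ω : Ultrafilter ℕ) (η η' : ℕ → ℝ) : ENNReal :=
  limw ω (fun n => ENNReal.ofReal (η n / η' n))

/-- `η ≤ η'` iff `lim_ω η_n/η'_n < ∞`. -/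
def ScaleLE (ω : Ultrafilter ℕ) (η η' : ℕ → ℝ) : Prop := scaleRatio ω η η' ≠ ⊤

/-- `η < η'` iff `lim_ω η_n/η'_n = 0`. -/
def ScaleLT (ω : Ultrafilter ℕ) (η η' : ℕ → ℝ) : Prop := scaleRatio ω η η' = 0

/-- A scale is non-trivial if `lim_ω ε_n = 0`. -/
def NontrivialScale (ω : Ultrafilter ℕ) (ε : ℕ → ℝ) : Prop :=
  limw ω (fun n => ENNReal.ofReal (ε n)) = 0

/-- Two scales are equivalent if `C⁻¹ η_n ≤ η'_n ≤ C η_n` ω-almost surely for some `C > 1`. -/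
def ScaleEquiv (ω : Ultrafilter ℕ) (η η' : ℕ → ℝ) : Prop :=
  ∃ C : ℝ, 1 < C ∧ {n | C⁻¹ * η n ≤ η' n ∧ η' n ≤ C * η n} ∈ ω

lemma limw_le_iff {ω : Ultrafilter ℕ} {a : ℕ → ENNReal} {x : ENNReal} :
    limw ω a ≤ x ↔ ∀ y, x < y → {n | a n < y} ∈ ω := by
  rw [limw, limsup_le_iff]
  constructor
  · intro h y hy; exact h y hy
  · intro h y hy; exact h y hy

lemma limw_ofReal_le_one_iff {ω : Ultrafilter ℕ} {a : ℕ → ℝ} :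
    limw ω (fun n => ENNReal.ofReal (a n)) ≤ 1 ↔ ∀ c : ℝ, 1 < c → {n | a n < c} ∈ ω := by
  rw [limw_le_iff]
  constructor
  · intro h c hc
    have h1 : (1 : ENNReal) < ENNReal.ofReal c := by
      rw [show (1 : ENNReal) = ENNReal.ofReal 1 by simp,
        ENNReal.ofReal_lt_ofReal_iff (by linarith)]
      exact hc
    refine Filter.mem_of_superset (h _ h1) ?_
    intro n hn
    exact ((ENNReal.ofReal_lt_ofReal_iff (by linarith)).1 hn)
  · intro h y hy
    rcases eq_or_ne y ⊤ with rfl | hne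
    · refine Filter.mem_of_superset Filter.univ_mem ?_
      intro n _; exact ENNReal.ofReal_lt_top
    · have h1 : (1 : ℝ) < y.toReal := by
        have := ENNReal.toReal_lt_toReal (by simp) hne |>.2 hy
        simpa using this
      refine Filter.mem_of_superset (h _ h1) ?_
      intro n hn
      have : ENNReal.ofReal (a n) < ENNReal.ofReal y.toReal :=
        (ENNReal.ofReal_lt_ofReal_iff (by linarith)).2 hn
      rwa [ENNReal.ofReal_toReal hne] at this

lemma limw_ofReal_eq_zero_iff {ω : Ultrafilter ℕ} {a : ℕ → ℝ} :
    limw ω (fun n => ENNReal.ofReal (a n)) = 0 ↔ ∀ c : ℝ, 0 < c → {n | a n < c} ∈ ω := by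
  rw [← nonpos_iff_eq_zero, limw_le_iff]
  constructor
  · intro h c hc
    have h1 : (0 : ENNReal) < ENNReal.ofReal c := ENNReal.ofReal_pos.2 hc
    refine Filter.mem_of_superset (h _ h1) ?_
    intro n hn
    exact (ENNReal.ofReal_lt_ofReal_iff hc).1 hn
  · intro h y hy
    rcases eq_or_ne y ⊤ with rfl | hne
    · exact Filter.mem_of_superset Filter.univ_mem fun n _ => ENNReal.ofReal_lt_top
    · have h1 : (0 : ℝ) < y.toReal := ENNReal.toReal_pos hy.ne' hne
      refine Filter.mem_of_superset (h _ h1) ?_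
      intro n hn
      have : ENNReal.ofReal (a n) < ENNReal.ofReal y.toReal :=
        (ENNReal.ofReal_lt_ofReal_iff h1).2 hn
      rwa [ENNReal.ofReal_toReal hne] at this

/-- STATEMENT 4: for a non-trivial scale `η`, one has `lim_ω |z_n|^{η_n} ≤ 1` iff there is a
non-trivial scale `η' > η` with `lim_ω |z_n|^{η'_n} ≤ 1`. -/
theorem stmt4 (ω : Ultrafilter ℕ) (hω : ∀ s : Set ℕ, sᶜ.Finite → s ∈ ω)
    (η : ℕ → ℝ) (hη : IsScale η) (hηnt : NontrivialScale ω η) (z : ℕ → ℂ) :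
    limNorm ω η z ≤ 1 ↔
      ∃ η' : ℕ → ℝ, IsScale η' ∧ NontrivialScale ω η' ∧ ScaleLT ω η η' ∧
        limNorm ω η' z ≤ 1 := by
  set b : ℕ → ℝ := fun n => ‖z n‖ with hb
  have hb0 : ∀ n, 0 ≤ b n := fun n => norm_nonneg _
  have hη0 : ∀ c : ℝ, 0 < c → {n | η n < c} ∈ ω := limw_ofReal_eq_zero_iff.1 hηnt
  constructor
  · intro h
    rw [limNorm, limw_ofReal_le_one_iff] at h
    set D : ℕ → ℝ := fun n => max (Real.sqrt (η n)) (Real.sqrt (η n * Real.log (b n)))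
      with hDdef
    have hD : ∀ n, 0 < D n :=
      fun n => lt_of_lt_of_le (Real.sqrt_pos.2 (hη n).1) (le_max_left _ _)
    refine ⟨fun n => η n / D n, ?_, ?_, ?_, ?_⟩
    · -- IsScale
      intro n
      refine ⟨div_pos (hη n).1 (hD n), ?_⟩
      have h1 : η n / D n ≤ η n / Real.sqrt (η n) :=
        div_le_div_of_nonneg_left (hη n).1.le (Real.sqrt_pos.2 (hη n).1) (le_max_left _ _)
      have h2 : η n / Real.sqrt (η n) = Real.sqrt (η n) := by
        rw [eq_comm, eq_div_iff (Real.sqrt_pos.2 (hη n).1).ne', Real.mul_self_sqrt (hη n).1.le]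
      exact h1.trans_eq h2 |>.trans (Real.sqrt_le_one.2 (hη n).2)
    · -- NontrivialScale
      rw [NontrivialScale, limw_ofReal_eq_zero_iff]
      intro c hc
      refine Filter.mem_of_superset (hη0 (c ^ 2) (by positivity)) ?_
      intro n hn
      have h1 : η n / D n ≤ η n / Real.sqrt (η n) :=
        div_le_div_of_nonneg_left (hη n).1.le (Real.sqrt_pos.2 (hη n).1) (le_max_left _ _)
      have h2 : η n / Real.sqrt (η n) = Real.sqrt (η n) := by
        rw [eq_comm, eq_div_iff (Real.sqrt_pos.2 (hη n).1).ne', Real.mul_self_sqrt (hη n).1.le]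
      calc η n / D n ≤ Real.sqrt (η n) := h1.trans_eq h2
        _ < c := (Real.sqrt_lt' hc).2 hn
    · -- ScaleLT
      rw [ScaleLT, scaleRatio, limw_ofReal_eq_zero_iff]
      intro c hc
      have hmem : {n | η n < c ^ 2} ∩ {n | b n ^ η n < Real.exp (c ^ 2)} ∈ ω :=
        Filter.inter_mem (hη0 _ (by positivity))
          (h _ (Real.one_lt_exp_iff.2 (by positivity)))
      refine Filter.mem_of_superset hmem ?_
      rintro n ⟨hn1, hn2⟩
      simp only [Set.mem_setOf_eq] at hn1 hn2
      have heq : η n / (η n / D n) = D n := by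
        rw [div_div_eq_mul_div, mul_comm, mul_div_assoc, div_self (hη n).1.ne', mul_one]
      rw [Set.mem_setOf_eq, heq]
      refine max_lt ((Real.sqrt_lt' hc).2 hn1) ?_
      by_cases hbn : 1 < b n
      · have hL : 0 < Real.log (b n) := Real.log_pos hbn
        have : b n ^ η n = Real.exp (Real.log (b n) * η n) :=
          Real.rpow_def_of_pos (by linarith) _
        rw [this, Real.exp_lt_exp] at hn2
        exact (Real.sqrt_lt' hc).2 (by nlinarith)
      · have : η n * Real.log (b n) ≤ 0 :=
          mul_nonpos_of_nonneg_of_nonpos (hη n).1.le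
            (Real.log_nonpos (hb0 n) (not_lt.1 hbn))
        rw [Real.sqrt_eq_zero'.2 this]
        exact hc
    · -- limNorm ≤ 1
      rw [limNorm, limw_ofReal_le_one_iff]
      intro c hc
      set L0 := Real.log c with hL0
      have hL0p : 0 < L0 := Real.log_pos hc
      refine Filter.mem_of_superset
        (h (Real.exp (L0 ^ 2)) (Real.one_lt_exp_iff.2 (by positivity))) ?_
      intro n hn
      by_cases hbn : 1 < b n
      · have hL : 0 < Real.log (b n) := Real.log_pos hbn
        have hbpos : (0:ℝ) < b n := by linarith
        have hexp : b n ^ η n = Real.exp (Real.log (b n) * η n) :=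
          Real.rpow_def_of_pos hbpos _
        rw [Set.mem_setOf_eq, hexp, Real.exp_lt_exp] at hn
        have hηL : 0 ≤ η n * Real.log (b n) := (mul_pos (hη n).1 hL).le
        have hkey : Real.log (b n) * (η n / D n) ≤ Real.sqrt (η n * Real.log (b n)) := by
          rw [mul_div_assoc', div_le_iff₀ (hD n)]
          calc Real.log (b n) * η n
              = Real.sqrt (η n * Real.log (b n)) * Real.sqrt (η n * Real.log (b n)) := by
                rw [Real.mul_self_sqrt hηL]; ring
            _ ≤ Real.sqrt (η n * Real.log (b n)) * D n :=
                mul_le_mul_of_nonneg_left (le_max_right _ _) (Real.sqrt_nonneg _)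
        have hsq : Real.sqrt (η n * Real.log (b n)) < L0 :=
          (Real.sqrt_lt' hL0p).2 (by nlinarith)
        have : b n ^ (η n / D n) = Real.exp (Real.log (b n) * (η n / D n)) :=
          Real.rpow_def_of_pos hbpos _
        show b n ^ (η n / D n) < c
        rw [this]
        calc Real.exp (Real.log (b n) * (η n / D n)) < Real.exp L0 :=
              Real.exp_lt_exp.2 (lt_of_le_of_lt hkey hsq)
          _ = c := Real.exp_log (by linarith)
      · have h1 : b n ^ (η n / D n) ≤ 1 :=
          Real.rpow_le_one (hb0 n) (not_lt.1 hbn) (div_pos (hη n).1 (hD n)).le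
        show b n ^ (η n / D n) < c
        exact lt_of_le_of_lt h1 hc
  · rintro ⟨η', hs', hnt', hlt, hle1⟩
    rw [limNorm, limw_ofReal_le_one_iff] at hle1 ⊢
    rw [ScaleLT, scaleRatio, limw_ofReal_eq_zero_iff] at hlt
    intro c hc
    set L0 := Real.log c with hL0
    have hL0p : 0 < L0 := Real.log_pos hc
    have hmem : {n | η n / η' n < L0} ∩ {n | b n ^ η' n < Real.exp 1} ∈ ω :=
      Filter.inter_mem (hlt _ hL0p) (hle1 _ (Real.one_lt_exp_iff.2 one_pos))
    refine Filter.mem_of_superset hmem ?_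
    rintro n ⟨hn1, hn2⟩
    simp only [Set.mem_setOf_eq] at hn1 hn2
    by_cases hbn : 1 < b n
    · have hL : 0 < Real.log (b n) := Real.log_pos hbn
      have hbpos : (0:ℝ) < b n := by linarith
      have hexp' : b n ^ η' n = Real.exp (Real.log (b n) * η' n) :=
        Real.rpow_def_of_pos hbpos _
      rw [hexp', Real.exp_lt_exp] at hn2
      have hratio : 0 ≤ η n / η' n := div_nonneg (hη n).1.le (hs' n).1.le
      have hkey : Real.log (b n) * η n ≤ η n / η' n := by
        have hne : η' n ≠ 0 := (hs' n).1.ne'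
        have heq : Real.log (b n) * η n = (η n / η' n) * (Real.log (b n) * η' n) := by
          field_simp
        rw [heq]
        calc (η n / η' n) * (Real.log (b n) * η' n) ≤ (η n / η' n) * 1 :=
              mul_le_mul_of_nonneg_left hn2.le hratio
          _ = η n / η' n := mul_one _
      have hexp : b n ^ η n = Real.exp (Real.log (b n) * η n) :=
        Real.rpow_def_of_pos hbpos _
      show b n ^ η n < c
      rw [hexp]
      calc Real.exp (Real.log (b n) * η n) < Real.exp L0 :=
            Real.exp_lt_exp.2 (lt_of_le_of_lt hkey hn1)
        _ = c := Real.exp_log (by linarith)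
    · have h1 : b n ^ η n ≤ 1 := Real.rpow_le_one (hb0 n) (not_lt.1 hbn) (hη n).1.le
      show b n ^ η n < c
      exact lt_of_le_of_lt h1 hc
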